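/- If a group G is boundedly generated and the real vector space of homogeneous quasimorphisms on G has dimension at least n+1 where n is the number of bounded generators, then a contradiction follows. Consequently, a group with an infinite-dimensional space of homogeneous quasimorphisms is not boundedly generated. -/
import Mathlib

/-- `q` is a homogeneous quasimorphism. -/
def IsHomogeneousQuasimorphism {G : Type} [Group G] (q : G → ℝ) : Prop :=
  (∃ D : ℝ, 0 ≤ D ∧ ∀ g h : G, |q (g * h) - q g - q h| ≤ D) ∧
  (∀ (g : G) (n : ℤ), q (g ^ n) = n * q g)

/-- `G` is boundedly generated: there are `c₁, …, c_n` and `N` such that every element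
is a product of `N` powers of the `cᵢ`. -/
def BoundedlyGenerated (G : Type) [Group G] : Prop :=
  ∃ (n N : ℕ) (c : Fin n → G), ∀ g : G, ∃ (i : Fin N → Fin n) (m : Fin N → ℤ),
    g = (List.ofFn fun j => c (i j) ^ m j).prod

lemma list_bound {G : Type} [Group G] (Q : G → ℝ) (D : ℝ) (hD : 0 ≤ D)
    (hq : ∀ g h, |Q (g * h) - Q g - Q h| ≤ D) (hQ1 : Q 1 = 0) :
    ∀ L : List G, (∀ x ∈ L, Q x = 0) → |Q L.prod| ≤ D * L.length := by
  intro L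
  induction L with
  | nil => simp [hQ1]
  | cons a t ih =>
    intro h
    have ha : Q a = 0 := h a (by simp)
    have ht : |Q t.prod| ≤ D * t.length := ih fun x hx => h x (by simp [hx])
    have key := hq a t.prod
    have : |Q (a * t.prod)| ≤ D + D * t.length := by
      have : Q (a * t.prod) = (Q (a * t.prod) - Q a - Q t.prod) + Q t.prod := by
        rw [ha]; ring
      rw [this]
      calc |(Q (a * t.prod) - Q a - Q t.prod) + Q t.prod|
          ≤ |Q (a * t.prod) - Q a - Q t.prod| + |Q t.prod| := abs_add_le _ _
        _ ≤ D + D * t.length := add_le_add key ht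
    simpa [List.prod_cons, mul_add, add_comm] using this

lemma key_part1 (G : Type) [Group G] (n N : ℕ) (c : Fin n → G)
    (hbg : ∀ g : G, ∃ (i : Fin N → Fin n) (m : Fin N → ℤ),
      g = (List.ofFn fun j => c (i j) ^ m j).prod)
    (q : Fin (n + 1) → G → ℝ)
    (hq : ∀ j, IsHomogeneousQuasimorphism (q j)) (hli : LinearIndependent ℝ q) :
    False := by
  -- choose defects
  choose D hD0 hDq using fun j => (hq j).1
  have hhom : ∀ j (g : G) (k : ℤ), q j (g ^ k) = k * q j g := fun j => (hq j).2
  -- linear map to Fin n → ℝ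
  let T : (Fin (n + 1) → ℝ) →ₗ[ℝ] (Fin n → ℝ) :=
    { toFun := fun a i => ∑ j, a j * q j (c i)
      map_add' := by
        intro a b; funext i; simp [add_mul, Finset.sum_add_distrib]
      map_smul' := by
        intro r a; funext i; simp [Finset.mul_sum, mul_assoc] }
  have hnotinj : ¬ Function.Injective T := by
    intro hinj
    have := LinearMap.finrank_le_finrank_of_injective hinj
    simp [Module.finrank_pi] at this
  rw [injective_iff_map_eq_zero' ] at hnotinj
  push_neg at hnotinj
  obtain ⟨a, ha⟩ := hnotinj
  have haT : T a = 0 ∧ a ≠ 0 := by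
    rcases ha with ⟨h1, h2⟩ | ⟨h1, h2⟩
    · exact ⟨h1, h2⟩
    · exact absurd (h2 ▸ map_zero T) h1
  obtain ⟨hker, hane⟩ := haT
  set Q : G → ℝ := fun g => ∑ j, a j * q j g with hQdef
  have hQc : ∀ i, Q (c i) = 0 := fun i => congrFun hker i
  have hQhom : ∀ (g : G) (k : ℤ), Q (g ^ k) = k * Q g := by
    intro g k
    simp only [hQdef, hhom, Finset.mul_sum]
    congr 1; funext j; ring
  have hQ1 : Q 1 = 0 := by
    have := hQhom 1 0
    simpa using this
  set DQ : ℝ := ∑ j, |a j| * D j with hDQdef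
  have hDQ0 : 0 ≤ DQ := Finset.sum_nonneg fun j _ => mul_nonneg (abs_nonneg _) (hD0 j)
  have hQquasi : ∀ g h : G, |Q (g * h) - Q g - Q h| ≤ DQ := by
    intro g h
    have : Q (g * h) - Q g - Q h = ∑ j, a j * (q j (g * h) - q j g - q j h) := by
      simp only [hQdef, mul_sub, Finset.sum_sub_distrib]
    rw [this]
    calc |∑ j, a j * (q j (g * h) - q j g - q j h)|
        ≤ ∑ j, |a j * (q j (g * h) - q j g - q j h)| := Finset.abs_sum_le_sum_abs _ _
      _ ≤ DQ := Finset.sum_le_sum fun j _ => by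
          rw [abs_mul]
          exact mul_le_mul_of_nonneg_left (hDq j g h) (abs_nonneg _)
  -- Q is bounded
  have hbound : ∀ g : G, |Q g| ≤ DQ * N := by
    intro g
    obtain ⟨i, m, hg⟩ := hbg g
    have hz : ∀ x ∈ (List.ofFn fun j => c (i j) ^ m j), Q x = 0 := by
      intro x hx
      rw [List.mem_ofFn] at hx
      obtain ⟨j, rfl⟩ := hx
      rw [hQhom]
      simp [hQc]
    have := list_bound Q DQ hDQ0 hQquasi hQ1 _ hz
    simpa [hg] using this
  -- Q vanishes
  have hQ0 : ∀ g : G, Q g = 0 := by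
    intro g
    by_contra hne
    have hpos : 0 < |Q g| := abs_pos.mpr hne
    obtain ⟨k, hk⟩ := exists_nat_gt (DQ * N / |Q g|)
    have hk' : DQ * N < k * |Q g| := (div_lt_iff₀ hpos).mp hk
    have : |Q (g ^ (k : ℤ))| = k * |Q g| := by
      rw [hQhom]; rw [abs_mul]; simp
    have := hbound (g ^ (k : ℤ))
    rw [‹|Q (g ^ (k : ℤ))| = k * |Q g|›] at this
    linarith
  -- contradiction with linear independence
  have := Fintype.linearIndependent_iff.mp hli a ?_
  · exact hane (funext fun j => this j)
  · funext g
    simpa [hQdef, mul_comm] using hQ0 g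

theorem bounded_generation_vs_quasimorphisms :
    (∀ (G : Type) [Group G] (n N : ℕ) (c : Fin n → G),
      (∀ g : G, ∃ (i : Fin N → Fin n) (m : Fin N → ℤ),
        g = (List.ofFn fun j => c (i j) ^ m j).prod) →
      ∀ q : Fin (n + 1) → G → ℝ,
        (∀ j, IsHomogeneousQuasimorphism (q j)) → LinearIndependent ℝ q → False) ∧
    (∀ (G : Type) [Group G] (q : ℕ → G → ℝ),
      (∀ j, IsHomogeneousQuasimorphism (q j)) → LinearIndependent ℝ q →
        ¬ BoundedlyGenerated G) := by
  constructor
  · exact key_part1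
  · intro G _ q hq hli hbg
    obtain ⟨n, N, c, hc⟩ := hbg
    exact key_part1 G n N c hc (fun j => q j)
      (fun j => hq _) (hli.comp (Fin.val : Fin (n + 1) → ℕ) Fin.val_injective)
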